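/- Let n, k, r, p be positive integers with 1 < p ≤ r and p ≤ k ≤ n, and set n₂ = ⌈n/r⌉·r. There exists an r-coloring χ of an n-element vertex set V such that the number of k-element subsets of V properly (r,p) colored by χ is at least C(n,k) − Σ_{i=1}^{p−1} m(n₂,k,r,i), where m(n₂,k,r,i) = C(r,i) · Σ_{j=0}^{i} (-1)^j · C(i,j) · C((n₂/r)·(i−j), k), and C(a,b) denotes the binomial coefficient (with C(a,b) = 0 when a < b). -/

import Mathlib

open Finset

/-- Inclusion–exclusion count of `k`-subsets of `S × β` with full first projection. -/
lemma aux_countF {α β : Type*} [DecidableEq α] [DecidableEq β] [Fintype β]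
    (k : ℕ) (S : Finset α) :
    ((((S ×ˢ (univ : Finset β)).powersetCard k).filter
        (fun e => e.image Prod.fst = S)).card : ℤ) =
      ∑ j ∈ range (S.card + 1),
        (-1 : ℤ) ^ j * (S.card.choose j : ℤ) *
          ((Fintype.card β * (S.card - j)).choose k : ℤ) := by
  classical
  rw [Finset.card_filter]
  push_cast
  have key : ∀ e ∈ (S ×ˢ (univ : Finset β)).powersetCard k,
      (if e.image Prod.fst = S then (1 : ℤ) else 0) =
        ∑ J ∈ S.powerset,
          if J ⊆ S \ e.image Prod.fst then (-1 : ℤ) ^ J.card else 0 := by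
    intro e he
    have hsub : e.image Prod.fst ⊆ S := by
      intro a ha
      obtain ⟨x, hx, rfl⟩ := mem_image.mp ha
      exact (mem_product.mp ((mem_powersetCard.mp he).1 hx)).1
    rw [← Finset.sum_filter]
    have hfilt : S.powerset.filter (fun J => J ⊆ S \ e.image Prod.fst)
        = (S \ e.image Prod.fst).powerset := by
      ext J
      simp only [mem_filter, mem_powerset]
      exact ⟨fun h => h.2, fun h => ⟨h.trans (sdiff_subset), h⟩⟩
    rw [hfilt, Finset.sum_powerset_neg_one_pow_card]
    have hiff : (e.image Prod.fst = S) ↔ (S \ e.image Prod.fst = ∅) := by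
      rw [sdiff_eq_empty_iff_subset]
      exact ⟨fun h => h ▸ Finset.Subset.refl _, fun h => Finset.Subset.antisymm hsub h⟩
    simp [hiff]
  rw [Finset.sum_congr rfl key, Finset.sum_comm]
  have inner : ∀ J ∈ S.powerset,
      (∑ e ∈ (S ×ˢ (univ : Finset β)).powersetCard k,
        if J ⊆ S \ e.image Prod.fst then (-1 : ℤ) ^ J.card else 0)
      = (-1 : ℤ) ^ J.card * ((Fintype.card β * (S.card - J.card)).choose k : ℤ) := by
    intro J hJ
    have hJS : J ⊆ S := mem_powerset.mp hJ
    rw [← Finset.sum_filter]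
    have hset : ((S ×ˢ (univ : Finset β)).powersetCard k).filter
        (fun e => J ⊆ S \ e.image Prod.fst)
        = ((S \ J) ×ˢ (univ : Finset β)).powersetCard k := by
      ext e
      simp only [mem_filter, mem_powersetCard]
      constructor
      · rintro ⟨⟨hes, hek⟩, hJe⟩
        refine ⟨fun x hx => ?_, hek⟩
        have hx1 := mem_product.mp (hes hx)
        rw [mem_product, mem_sdiff]
        refine ⟨⟨hx1.1, fun hxJ => ?_⟩, hx1.2⟩
        have := mem_sdiff.mp (hJe hxJ)
        exact this.2 (mem_image.mpr ⟨x, hx, rfl⟩)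
      · rintro ⟨hes, hek⟩
        refine ⟨⟨fun x hx => ?_, hek⟩, fun a haJ => ?_⟩
        · have := mem_product.mp (hes hx)
          exact mem_product.mpr ⟨(mem_sdiff.mp this.1).1, this.2⟩
        · rw [mem_sdiff]
          refine ⟨hJS haJ, fun hmem => ?_⟩
          obtain ⟨x, hx, rfl⟩ := mem_image.mp hmem
          exact (mem_sdiff.mp (mem_product.mp (hes hx)).1).2 haJ
    rw [hset, Finset.sum_const, Finset.card_powersetCard, Finset.card_product,
      Finset.card_univ, Finset.card_sdiff_of_subset hJS, nsmul_eq_mul]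
    push_cast
    ring_nf
  rw [Finset.sum_congr rfl inner, Finset.powerset_card_disjiUnion]
  erw [Finset.sum_disjiUnion]
  refine Finset.sum_congr rfl fun j hj => ?_
  have : ∀ J ∈ S.powersetCard j,
      (-1 : ℤ) ^ J.card * ((Fintype.card β * (S.card - J.card)).choose k : ℤ)
      = (-1 : ℤ) ^ j * ((Fintype.card β * (S.card - j)).choose k : ℤ) := by
    intro J hJ
    rw [(mem_powersetCard.mp hJ).2]
  rw [Finset.sum_congr rfl this, Finset.sum_const, Finset.card_powersetCard, nsmul_eq_mul]
  push_cast
  ring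

/-- Lower bound: with `n₂ = ⌈n/r⌉·r`, there is an `r`-coloring of an `n`-element vertex set for
which the number of properly `(r,p)` colored `k`-element subsets is at least
`C(n,k) − Σ_{i=1}^{p-1} m(n₂,k,r,i)`. -/
theorem stmt_5 (n k r p : ℕ) (hn : 0 < n) (hk : 0 < k) (hr : 0 < r) (hp : 1 < p)
    (hpr : p ≤ r) (hpk : p ≤ k) (hkn : k ≤ n)
    (V : Type*) [Fintype V] [DecidableEq V] (hV : Fintype.card V = n) :
    ∃ χ : V → Fin r,
      (n.choose k : ℤ) -
          ∑ i ∈ Finset.Icc 1 (p - 1),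
            (r.choose i : ℤ) *
              ∑ j ∈ Finset.range (i + 1),
                (-1 : ℤ) ^ j * (i.choose j : ℤ) *
                  (((((n + r - 1) / r * r) / r * (i - j)).choose k : ℕ) : ℤ) ≤
        ((((Finset.univ : Finset V).powersetCard k).filter
            (fun e : Finset V => p ≤ (e.image χ).card)).card : ℤ) := by
  classical
  set q : ℕ := (n + r - 1) / r with hq
  have hqr : (n + r - 1) / r * r / r = q := by rw [Nat.mul_div_cancel _ hr]
  have hq' : n + r - 1 = (n - 1) + r := by omega
  have hq2 : q = (n - 1) / r + 1 := by rw [hq, hq', Nat.add_div_right _ hr]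
  have hnq : n ≤ q * r := by
    have h3 : n - 1 < ((n - 1) / r + 1) * r :=
      (Nat.div_lt_iff_lt_mul hr).mp (Nat.lt_succ_self _)
    rw [hq2]
    exact Nat.le_of_pred_lt h3
  let eV : V ≃ Fin n := Fintype.equivFinOfCardEq hV
  set χ : V → Fin r := fun v => ⟨(eV v : ℕ) % r, Nat.mod_lt _ hr⟩ with hχ
  set δ : V → Fin q := fun v => ⟨(eV v : ℕ) / r, by
    have hlt : (eV v : ℕ) < q * r := lt_of_lt_of_le (eV v).isLt hnq
    exact (Nat.div_lt_iff_lt_mul hr).mpr hlt⟩ with hδ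
  set ψ : V → Fin r × Fin q := fun v => (χ v, δ v) with hψdef
  have hψ : Function.Injective ψ := by
    intro v w h
    have h1 : (eV v : ℕ) % r = (eV w : ℕ) % r := congrArg (fun x => (x.1 : ℕ)) h
    have h2 : (eV v : ℕ) / r = (eV w : ℕ) / r := congrArg (fun x => (x.2 : ℕ)) h
    apply eV.injective
    apply Fin.ext
    have e1 := Nat.div_add_mod (eV v : ℕ) r
    have e2 := Nat.div_add_mod (eV w : ℕ) r
    rw [h1, h2] at e1
    exact e1.symm.trans e2
  refine ⟨χ, ?_⟩
  set good := ((Finset.univ : Finset V).powersetCard k).filter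
      (fun e : Finset V => p ≤ (e.image χ).card) with hgood
  set bad := ((Finset.univ : Finset V).powersetCard k).filter
      (fun e : Finset V => ¬ p ≤ (e.image χ).card) with hbad
  have htot : good.card + bad.card = n.choose k := by
    rw [hgood, hbad, Finset.card_filter_add_card_filter_not,
      Finset.card_powersetCard, Finset.card_univ, hV]
  -- it suffices to bound the number of bad sets
  suffices hsuf : (bad.card : ℤ) ≤
      ∑ i ∈ Finset.Icc 1 (p - 1),
        (r.choose i : ℤ) *
          ∑ j ∈ Finset.range (i + 1),
            (-1 : ℤ) ^ j * (i.choose j : ℤ) *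
              (((((n + r - 1) / r * r) / r * (i - j)).choose k : ℕ) : ℤ) by
    have := htot
    push_cast [← this]
    linarith
  -- rewrite the divisor expression
  have hqrw : ∀ i j : ℕ, ((n + r - 1) / r * r) / r * (i - j) = q * (i - j) := by
    intro i j; rw [hqr]
  -- fiberwise decomposition of bad over images
  set T : Finset (Finset (Fin r)) :=
    (Finset.Icc 1 (p - 1)).biUnion (fun i => Finset.powersetCard i Finset.univ) with hT
  have hmap : ∀ e ∈ bad, e.image χ ∈ T := by
    intro e he
    rw [hbad, mem_filter, Finset.mem_powersetCard] at he
    obtain ⟨⟨hsub, hcard⟩, hlt⟩ := he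
    rw [hT, Finset.mem_biUnion]
    refine ⟨(e.image χ).card, ?_, Finset.mem_powersetCard_univ.mpr rfl⟩
    rw [Finset.mem_Icc]
    constructor
    · have : e.Nonempty := Finset.card_pos.mp (hcard ▸ hk)
      exact Finset.card_pos.mpr (this.image χ)
    · omega
  have hfiber : bad.card = ∑ S ∈ T, (bad.filter (fun e => e.image χ = S)).card :=
    Finset.card_eq_sum_card_fiberwise hmap
  have hdisj : (↑(Finset.Icc 1 (p - 1)) : Set ℕ).PairwiseDisjoint
      (fun i => Finset.powersetCard i (Finset.univ : Finset (Fin r))) := by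
    intro a _ b _ hab
    apply Finset.disjoint_left.mpr
    intro S hSa hSb
    exact hab ((Finset.mem_powersetCard_univ.mp hSa).symm.trans
      (Finset.mem_powersetCard_univ.mp hSb))
  rw [hfiber, hT, Finset.sum_biUnion hdisj]
  push_cast
  refine Finset.sum_le_sum fun i hi => ?_
  -- per color class count bound
  have hbound : ∀ S ∈ Finset.powersetCard i (Finset.univ : Finset (Fin r)),
      ((bad.filter (fun e => e.image χ = S)).card : ℤ) ≤
        (((S ×ˢ (univ : Finset (Fin q))).powersetCard k).filter
          (fun e => e.image Prod.fst = S)).card := by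
    intro S hS
    have : (bad.filter (fun e => e.image χ = S)).card ≤
        (((S ×ˢ (univ : Finset (Fin q))).powersetCard k).filter
          (fun e => e.image Prod.fst = S)).card := by
      apply Finset.card_le_card_of_injOn (fun e => e.image ψ)
      · intro e he
        rw [mem_coe, mem_filter] at he
        obtain ⟨he1, he2⟩ := he
        rw [hbad, mem_filter, Finset.mem_powersetCard] at he1
        obtain ⟨⟨_, hcard⟩, _⟩ := he1
        rw [mem_coe, mem_filter, Finset.mem_powersetCard]
        refine ⟨⟨?_, ?_⟩, ?_⟩
        · intro x hx
          obtain ⟨v, hv, rfl⟩ := mem_image.mp hx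
          rw [mem_product]
          exact ⟨he2 ▸ mem_image_of_mem χ hv, mem_univ _⟩
        · rw [Finset.card_image_of_injective _ hψ, hcard]
        · rw [Finset.image_image]
          exact he2
      · intro a _ b _ h
        exact Finset.image_injective hψ h
    exact_mod_cast this
  calc ∑ S ∈ Finset.powersetCard i (Finset.univ : Finset (Fin r)),
        ((bad.filter (fun e => e.image χ = S)).card : ℤ)
      ≤ ∑ S ∈ Finset.powersetCard i (Finset.univ : Finset (Fin r)),
        ((((S ×ˢ (univ : Finset (Fin q))).powersetCard k).filter
          (fun e => e.image Prod.fst = S)).card : ℤ) := Finset.sum_le_sum hbound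
    _ = ∑ S ∈ Finset.powersetCard i (Finset.univ : Finset (Fin r)),
        ∑ j ∈ Finset.range (i + 1),
          (-1 : ℤ) ^ j * (i.choose j : ℤ) * ((q * (i - j)).choose k : ℤ) := by
        refine Finset.sum_congr rfl fun S hS => ?_
        have hScard : S.card = i := Finset.mem_powersetCard_univ.mp hS
        rw [aux_countF k S, hScard, Fintype.card_fin]
    _ = (r.choose i : ℤ) * ∑ j ∈ Finset.range (i + 1),
          (-1 : ℤ) ^ j * (i.choose j : ℤ) *
            (((((n + r - 1) / r * r) / r * (i - j)).choose k : ℕ) : ℤ) := by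
        have hrw : ∀ j ∈ Finset.range (i + 1),
            (-1 : ℤ) ^ j * (i.choose j : ℤ) * ((q * (i - j)).choose k : ℤ)
            = (-1 : ℤ) ^ j * (i.choose j : ℤ) *
                (((((n + r - 1) / r * r) / r * (i - j)).choose k : ℕ) : ℤ) := by
          intro j _; rw [hqrw]
        rw [Finset.sum_congr rfl hrw, Finset.sum_const, Finset.card_powersetCard,
          Finset.card_univ, Fintype.card_fin, nsmul_eq_mul]
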